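/- Let φ be a 3-SAT formula with variables x_1, …, x_N and clauses c_1, …, c_M, each clause consisting of exactly three pairwise distinct and pairwise non-complementary literals, and let (ℓ, G, H, ⟨≺_H, σ_H⟩) with ℓ = 2N + 1 be the Stack Layout Extension instance constructed from φ as described in the context. Then φ is satisfiable if and only if G admits an ℓ-page stack layout extending ⟨≺_H, σ_H⟩. -/
import Mathlib


/-- Two edges `e` and `f` alternate (cross) with respect to the vertex position
function `pos`: `e = {a, c}` and `f = {b, d}` with `pos a < pos b < pos c < pos d`. -/
def EdgesCross {V : Type*} (pos : V → ℕ) (e f : Sym2 V) : Prop :=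
  ∃ a b c d : V, e = s(a, c) ∧ f = s(b, d) ∧ pos a < pos b ∧ pos b < pos c ∧ pos c < pos d

/-- The vertices used in the NP-hardness construction: the fixation-gadget vertices
`b t, gv t, a t` (for `t < 3`, where `gv` plays the role of the gadget vertices `v_t`),
the dummy vertices `d q` (for `q ≤ N + M`, 0-indexed), one vertex `X i` per variable,
one vertex `C j` per clause, and the two new vertices `s` and `w` (the latter is the
verifier vertex, called `v` in the paper). -/
inductive SatVtx : Type where
  | b (t : ℕ) | gv (t : ℕ) | a (t : ℕ) | d (q : ℕ) | X (i : ℕ) | C (j : ℕ) | s | w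
deriving DecidableEq

/-- The spine position of the host vertices: the gadget block
`b₁ ≺ v₁ ≺ a₁ ≺ b₂ ≺ v₂ ≺ a₂ ≺ b₃ ≺ v₃ ≺ a₃` followed by
`d₁ ≺ X₁ ≺ d₂ ≺ X₂ ≺ … ≺ X_N ≺ d_{N+1} ≺ C₁ ≺ … ≺ C_M ≺ d_{N+M+1}` (0-indexed). -/
def satPos (N : ℕ) : SatVtx → ℕ
  | .b t => 3 * t
  | .gv t => 3 * t + 1
  | .a t => 3 * t + 2
  | .d q => 9 + 2 * q
  | .X i => 10 + 2 * i
  | .C j => 10 + 2 * (N + j)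
  | .s => 0
  | .w => 0

/-- The host vertices, i.e. `V(H)`. -/
def satHost (N M : ℕ) : SatVtx → Prop
  | .b t => t < 3
  | .gv t => t < 3
  | .a t => t < 3
  | .d q => q ≤ N + M
  | .X i => i < N
  | .C j => j < M
  | .s => False
  | .w => False

/-- The host page assignment (per-page-edge-set model).  The `2N + 1` pages are
`{0, …, 2N}`: page `2i` is `p_i` (variable `i` true), page `2i + 1` is `p_{¬i}`,
and page `2N` is the dummy page `p_d`.  A literal is a pair `(i, sign)` and
`lit j t` is the `t`-th literal of clause `j`. -/
def satHostPage (N M : ℕ) (lit : ℕ → ℕ → ℕ × Bool) (p : ℕ) (ep : Sym2 SatVtx) : Prop :=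
  (p < 2 * N ∧ ∃ t, t < 3 ∧ ep = s(SatVtx.b t, SatVtx.a t)) ∨
  (p = 2 * N ∧ ∃ t, t < 3 ∧
    (ep = s(SatVtx.b t, SatVtx.gv t) ∨ ep = s(SatVtx.gv t, SatVtx.a t))) ∨
  (p = 2 * N ∧ (ep = s(SatVtx.gv 0, SatVtx.gv 1) ∨ ep = s(SatVtx.gv 1, SatVtx.gv 2) ∨
    ep = s(SatVtx.b 0, SatVtx.a 2) ∨ ep = s(SatVtx.d 0, SatVtx.d (N + M)))) ∨
  (∃ i j, i < N ∧ j < N ∧ i ≠ j ∧ ep = s(SatVtx.d i, SatVtx.d (i + 1)) ∧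
    (p = 2 * j ∨ p = 2 * j + 1)) ∨
  (∃ j i, j < M ∧ i < N ∧ ep = s(SatVtx.d (N + j), SatVtx.d (N + j + 1)) ∧
    (((∃ t, t < 3 ∧ lit j t = (i, true)) ∧ p = 2 * i) ∨
     ((∃ t, t < 3 ∧ lit j t = (i, false)) ∧ p = 2 * i + 1) ∨
     ((∀ t, t < 3 → (lit j t).1 ≠ i) ∧ (p = 2 * i ∨ p = 2 * i + 1))))

/-- The new edges of `G`: `s v₁, s v₂, w v₂, w v₃`, `s X_i` for every variable `i`,
and `w C_j` for every clause `j`. -/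
def satNew (N M : ℕ) : Set (Sym2 SatVtx) :=
  {ep | ep = s(SatVtx.s, SatVtx.gv 0) ∨ ep = s(SatVtx.s, SatVtx.gv 1) ∨
        ep = s(SatVtx.w, SatVtx.gv 1) ∨ ep = s(SatVtx.w, SatVtx.gv 2) ∨
        (∃ i, i < N ∧ ep = s(SatVtx.s, SatVtx.X i)) ∨
        (∃ j, j < M ∧ ep = s(SatVtx.w, SatVtx.C j))}

theorem cross_elim {V : Type*} (pos : V → ℕ) {x y u v : V} (h : EdgesCross pos s(x,y) s(u,v)) :
    (pos x < pos u ∧ pos u < pos y ∧ pos y < pos v) ∨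
    (pos x < pos v ∧ pos v < pos y ∧ pos y < pos u) ∨
    (pos y < pos u ∧ pos u < pos x ∧ pos x < pos v) ∨
    (pos y < pos v ∧ pos v < pos x ∧ pos x < pos u) := by
  obtain ⟨a, b, c, d, he, hf, h1, h2, h3⟩ := h
  rw [Sym2.eq_iff] at he hf
  rcases he with ⟨rfl, rfl⟩ | ⟨rfl, rfl⟩ <;> rcases hf with ⟨rfl, rfl⟩ | ⟨rfl, rfl⟩ <;> tauto

def fwdPos (N : ℕ) : SatVtx → ℕ
  | .b t => 6 * t
  | .gv t => 6 * t + 2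
  | .a t => 6 * t + 4
  | .d q => 18 + 4 * q
  | .X i => 20 + 4 * i
  | .C j => 20 + 4 * (N + j)
  | .s => 5
  | .w => 11

def pgv (N : ℕ) (Γ : ℕ → Bool) (lit : ℕ → ℕ → ℕ × Bool) (ts : ℕ → ℕ) : SatVtx → ℕ
  | .gv _ => 2 * N
  | .X i => if Γ i then 2 * i else 2 * i + 1
  | .C j => if (lit j (ts j)).2 then 2 * (lit j (ts j)).1 + 1 else 2 * (lit j (ts j)).1
  | _ => 0

def fσ (N : ℕ) (Γ : ℕ → Bool) (lit : ℕ → ℕ → ℕ × Bool) (ts : ℕ → ℕ) : Sym2 SatVtx → ℕ :=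
  Sym2.lift ⟨fun u v => pgv N Γ lit ts u + pgv N Γ lit ts v, fun _ _ => Nat.add_comm _ _⟩

lemma fσ_mk (N Γ lit ts) (u v : SatVtx) :
    fσ N Γ lit ts s(u, v) = pgv N Γ lit ts u + pgv N Γ lit ts v := rfl

lemma pgv_s (N Γ lit ts) : pgv N Γ lit ts SatVtx.s = 0 := rfl
lemma pgv_w (N Γ lit ts) : pgv N Γ lit ts SatVtx.w = 0 := rfl
lemma pgv_gv (N Γ lit ts) (t : ℕ) : pgv N Γ lit ts (SatVtx.gv t) = 2 * N := rfl

lemma pgvX_or (N Γ lit ts) (i : ℕ) :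
    pgv N Γ lit ts (SatVtx.X i) = 2 * i ∨ pgv N Γ lit ts (SatVtx.X i) = 2 * i + 1 := by
  by_cases h : Γ i <;> simp [pgv, h]

lemma pgvC_lt (N Γ lit ts) (j : ℕ) (h : (lit j (ts j)).1 < N) :
    pgv N Γ lit ts (SatVtx.C j) < 2 * N := by
  cases hs : (lit j (ts j)).2 <;> simp [pgv, hs] <;> omega

lemma pgvX_ne_pgvC (N Γ lit ts) (i j : ℕ)
    (hsel : Γ (lit j (ts j)).1 = (lit j (ts j)).2) :
    pgv N Γ lit ts (SatVtx.X i) ≠ pgv N Γ lit ts (SatVtx.C j) := by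
  cases hB : (lit j (ts j)).2 <;> cases hΓ : Γ i <;>
      rw [hB] at hsel <;> simp only [pgv] <;> rw [hB, hΓ] <;> simp <;>
    first
      | omega
      | (have hne : i ≠ (lit j (ts j)).1 := by
           intro h; rw [h] at hΓ; rw [hΓ] at hsel; cases hsel
         omega)

lemma pgvC_avoid (N : ℕ) (Γ : ℕ → Bool) (lit : ℕ → ℕ → ℕ × Bool) (ts : ℕ → ℕ) (j i : ℕ)
    (hts1 : ts j < 3) (hts2 : Γ (lit j (ts j)).1 = (lit j (ts j)).2)
    (hd : ∀ t < 3, ∀ t' < 3, (lit j t).1 = (lit j t').1 → t = t') :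
    ¬(((∃ t, t < 3 ∧ lit j t = (i, true)) ∧ pgv N Γ lit ts (SatVtx.C j) = 2 * i) ∨
      ((∃ t, t < 3 ∧ lit j t = (i, false)) ∧ pgv N Γ lit ts (SatVtx.C j) = 2 * i + 1) ∨
      ((∀ t, t < 3 → (lit j t).1 ≠ i) ∧
        (pgv N Γ lit ts (SatVtx.C j) = 2 * i ∨ pgv N Γ lit ts (SatVtx.C j) = 2 * i + 1))) := by
  rintro (⟨⟨t, ht, hl⟩, hp⟩ | ⟨⟨t, ht, hl⟩, hp⟩ | ⟨habs, hp⟩) <;>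
      cases hB : (lit j (ts j)).2 <;> simp only [pgv] at hp <;> rw [hB] at hp <;> simp at hp
  · -- (i,true) in clause, hB = false, pgC = 2v = 2i
    have hv : (lit j (ts j)).1 = i := by omega
    have heq := hd (ts j) hts1 t ht (by rw [hv, hl])
    have h2 : (lit j (ts j)).2 = true := by rw [heq, hl]
    rw [hB] at h2; cases h2
  · -- (i,true), hB = true, pgC = 2v+1 = 2i: parity
    omega
  · -- (i,false), hB = false, pgC = 2v = 2i+1: parity
    omega
  · -- (i,false), hB = true, pgC = 2v+1 = 2i+1, so v = i
    have hv : (lit j (ts j)).1 = i := by omega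
    have heq := hd (ts j) hts1 t ht (by rw [hv, hl])
    have h2 : (lit j (ts j)).2 = false := by rw [heq, hl]
    rw [hB] at h2; cases h2
  · have hv : (lit j (ts j)).1 = i := by omega
    exact habs (ts j) hts1 hv
  · have hv : (lit j (ts j)).1 = i := by omega
    exact habs (ts j) hts1 hv

theorem fwd_main (N M : ℕ) (lit : ℕ → ℕ → ℕ × Bool)
    (hlit : ∀ j < M, ∀ t < 3, (lit j t).1 < N)
    (hdist : ∀ j < M, ∀ t < 3, ∀ t' < 3, (lit j t).1 = (lit j t').1 → t = t')
    (Γ : ℕ → Bool) (hΓ : ∀ j < M, ∃ t, t < 3 ∧ Γ (lit j t).1 = (lit j t).2) :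
    ∃ (posG : SatVtx → ℕ) (σ : Sym2 SatVtx → ℕ),
        Set.InjOn posG {v | satHost N M v ∨ v = SatVtx.s ∨ v = SatVtx.w} ∧
        (∀ y z, satHost N M y → satHost N M z →
          (satPos N y < satPos N z ↔ posG y < posG z)) ∧
        (∀ e ∈ satNew N M, σ e ≤ 2 * N) ∧
        (∀ p e f, (satHostPage N M lit p e ∨ e ∈ satNew N M ∧ σ e = p) →
          (satHostPage N M lit p f ∨ f ∈ satNew N M ∧ σ f = p) →
          ¬ EdgesCross posG e f) := by
  have hsel : ∀ j, ∃ t, j < M → (t < 3 ∧ Γ (lit j t).1 = (lit j t).2) := by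
    intro j
    by_cases h : j < M
    · obtain ⟨t, ht1, ht2⟩ := hΓ j h
      exact ⟨t, fun _ => ⟨ht1, ht2⟩⟩
    · exact ⟨0, fun hh => absurd hh h⟩
  choose ts hts using hsel
  refine ⟨fwdPos N, fσ N Γ lit ts, ?_, ?_, ?_, ?_⟩
  · intro u hu v hv h
    simp only [Set.mem_setOf_eq, satHost] at hu hv
    rcases u <;> rcases v <;> simp only [fwdPos] at h <;> simp at hu hv <;>
      first
        | rfl
        | (exact absurd h (by omega))
        | (exact congrArg _ (by omega))
  · intro y z hy hz
    rcases y <;> rcases z <;> simp only [satHost] at hy hz <;>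
      simp only [satPos, fwdPos] <;> omega
  · intro e he
    simp only [satNew, Set.mem_setOf_eq] at he
    rcases he with rfl | rfl | rfl | rfl | ⟨i, hi, rfl⟩ | ⟨j, hj, rfl⟩ <;>
      simp only [fσ_mk, pgv_s, pgv_w, pgv_gv, Nat.zero_add, Nat.add_zero]
    · omega
    · omega
    · omega
    · omega
    · rcases pgvX_or N Γ lit ts i with h | h <;> omega
    · have := pgvC_lt N Γ lit ts j (hlit j hj (ts j) (hts j hj).1); omega
  · intro p e f he hf
    simp only [satHostPage, satNew, Set.mem_setOf_eq] at he hf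
    rcases he with (⟨hq1, t1, ht1, rfl⟩ | ⟨hq1, t1, ht1, (rfl | rfl)⟩ |
        ⟨hq1, (rfl | rfl | rfl | rfl)⟩ |
        ⟨i1, j1, hi1, hj1, hij1, rfl, hq1⟩ | ⟨j1, i1, hj1, hi1, rfl, hq1⟩) |
        ⟨(rfl | rfl | rfl | rfl | ⟨i1, hi1, rfl⟩ | ⟨j1, hj1, rfl⟩), hq1⟩ <;>
      rcases hf with (⟨hq2, t2, ht2, rfl⟩ | ⟨hq2, t2, ht2, (rfl | rfl)⟩ |
        ⟨hq2, (rfl | rfl | rfl | rfl)⟩ |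
        ⟨i2, j2, hi2, hj2, hij2, rfl, hq2⟩ | ⟨j2, i2, hj2, hi2, rfl, hq2⟩) |
        ⟨(rfl | rfl | rfl | rfl | ⟨i2, hi2, rfl⟩ | ⟨j2, hj2, rfl⟩), hq2⟩ <;>
      (try simp only [fσ_mk, pgv_s, pgv_w, pgv_gv, Nat.zero_add, Nat.add_zero] at hq1) <;>
      (try simp only [fσ_mk, pgv_s, pgv_w, pgv_gv, Nat.zero_add, Nat.add_zero] at hq2) <;>
      intro hc <;>
      (obtain h := cross_elim _ hc; simp only [fwdPos] at h) <;>
      first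
        | omega
        | (rcases pgvX_or N Γ lit ts i1 with h' | h' <;> omega)
        | (rcases pgvX_or N Γ lit ts i2 with h' | h' <;> omega)
        | (have h' := pgvC_lt N Γ lit ts j1 (hlit j1 hj1 (ts j1) (hts j1 hj1).1); omega)
        | (have h' := pgvC_lt N Γ lit ts j2 (hlit j2 hj2 (ts j2) (hts j2 hj2).1); omega)
        | (have h' := pgvX_ne_pgvC N Γ lit ts i1 j2 (hts j2 hj2).2; omega)
        | (have h' := pgvX_ne_pgvC N Γ lit ts i2 j1 (hts j1 hj1).2; omega)
        | (have hjj : j2 = j1 := by omega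
           subst hjj
           rw [← hq1] at hq2
           exact pgvC_avoid N Γ lit ts j2 i2 (hts j2 hj2).1 (hts j2 hj2).2 (hdist j2 hj2) hq2)

theorem rev_main (N M : ℕ) (lit : ℕ → ℕ → ℕ × Bool)
    (hlit : ∀ j < M, ∀ t < 3, (lit j t).1 < N)
    (hdist : ∀ j < M, ∀ t < 3, ∀ t' < 3, (lit j t).1 = (lit j t').1 → t = t')
    (h : ∃ (posG : SatVtx → ℕ) (σ : Sym2 SatVtx → ℕ),
        Set.InjOn posG {v | satHost N M v ∨ v = SatVtx.s ∨ v = SatVtx.w} ∧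
        (∀ y z, satHost N M y → satHost N M z →
          (satPos N y < satPos N z ↔ posG y < posG z)) ∧
        (∀ e ∈ satNew N M, σ e ≤ 2 * N) ∧
        (∀ p e f, (satHostPage N M lit p e ∨ e ∈ satNew N M ∧ σ e = p) →
          (satHostPage N M lit p f ∨ f ∈ satNew N M ∧ σ f = p) →
          ¬ EdgesCross posG e f)) :
    ∃ Γ : ℕ → Bool, ∀ j < M, ∃ t, t < 3 ∧ Γ (lit j t).1 = (lit j t).2 := by
  obtain ⟨P, σ, hinj, hord, hσle, hnc⟩ := h
  have Hb : ∀ t, t < 3 → satHost N M (SatVtx.b t) := fun _ ht => ht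
  have Hgv : ∀ t, t < 3 → satHost N M (SatVtx.gv t) := fun _ ht => ht
  have Ha : ∀ t, t < 3 → satHost N M (SatVtx.a t) := fun _ ht => ht
  have Hd : ∀ q, q ≤ N + M → satHost N M (SatVtx.d q) := fun _ hq => hq
  have HX : ∀ i, i < N → satHost N M (SatVtx.X i) := fun _ hi => hi
  have HC : ∀ j, j < M → satHost N M (SatVtx.C j) := fun _ hj => hj
  have hlt : ∀ {y z}, satHost N M y → satHost N M z → satPos N y < satPos N z → P y < P z :=
    fun hy hz hp => (hord _ _ hy hz).1 hp
  have hnes : ∀ z, satHost N M z → P SatVtx.s ≠ P z := by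
    intro z hz heq
    have h2 := hinj (Or.inr (Or.inl rfl)) (Or.inl hz) heq
    rw [← h2] at hz
    exact hz
  have hnew : ∀ z, satHost N M z → P SatVtx.w ≠ P z := by
    intro z hz heq
    have h2 := hinj (Or.inr (Or.inr rfl)) (Or.inl hz) heq
    rw [← h2] at hz
    exact hz
  -- basic position chains among gadget hosts
  have hb0gv0 : P (SatVtx.b 0) < P (SatVtx.gv 0) :=
    hlt (Hb 0 (by norm_num)) (Hgv 0 (by norm_num)) (by norm_num [satPos])
  have hgv0a0 : P (SatVtx.gv 0) < P (SatVtx.a 0) :=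
    hlt (Hgv 0 (by norm_num)) (Ha 0 (by norm_num)) (by norm_num [satPos])
  have hgv0b1 : P (SatVtx.gv 0) < P (SatVtx.b 1) :=
    hlt (Hgv 0 (by norm_num)) (Hb 1 (by norm_num)) (by norm_num [satPos])
  have hgv0gv1 : P (SatVtx.gv 0) < P (SatVtx.gv 1) :=
    hlt (Hgv 0 (by norm_num)) (Hgv 1 (by norm_num)) (by norm_num [satPos])
  have hgv0gv2 : P (SatVtx.gv 0) < P (SatVtx.gv 2) :=
    hlt (Hgv 0 (by norm_num)) (Hgv 2 (by norm_num)) (by norm_num [satPos])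
  have hgv0a2 : P (SatVtx.gv 0) < P (SatVtx.a 2) :=
    hlt (Hgv 0 (by norm_num)) (Ha 2 (by norm_num)) (by norm_num [satPos])
  have hb0gv2 : P (SatVtx.b 0) < P (SatVtx.gv 2) :=
    hlt (Hb 0 (by norm_num)) (Hgv 2 (by norm_num)) (by norm_num [satPos])
  have hgv2a2 : P (SatVtx.gv 2) < P (SatVtx.a 2) :=
    hlt (Hgv 2 (by norm_num)) (Ha 2 (by norm_num)) (by norm_num [satPos])
  have hb2gv2 : P (SatVtx.b 2) < P (SatVtx.gv 2) :=
    hlt (Hb 2 (by norm_num)) (Hgv 2 (by norm_num)) (by norm_num [satPos])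
  have hgv1gv2 : P (SatVtx.gv 1) < P (SatVtx.gv 2) :=
    hlt (Hgv 1 (by norm_num)) (Hgv 2 (by norm_num)) (by norm_num [satPos])
  have ha1gv2 : P (SatVtx.a 1) < P (SatVtx.gv 2) :=
    hlt (Ha 1 (by norm_num)) (Hgv 2 (by norm_num)) (by norm_num [satPos])
  have hb1a1 : P (SatVtx.b 1) < P (SatVtx.a 1) :=
    hlt (Hb 1 (by norm_num)) (Ha 1 (by norm_num)) (by norm_num [satPos])
  have ha0b1 : P (SatVtx.a 0) < P (SatVtx.b 1) :=
    hlt (Ha 0 (by norm_num)) (Hb 1 (by norm_num)) (by norm_num [satPos])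
  have ha1b2 : P (SatVtx.a 1) < P (SatVtx.b 2) :=
    hlt (Ha 1 (by norm_num)) (Hb 2 (by norm_num)) (by norm_num [satPos])
  -- the new-edge memberships
  have memsgv0 : s(SatVtx.s, SatVtx.gv 0) ∈ satNew N M := Or.inl rfl
  have memwgv2 : s(SatVtx.w, SatVtx.gv 2) ∈ satNew N M :=
    Or.inr (Or.inr (Or.inr (Or.inl rfl)))
  -- Claim 1 : P s < P (b 1)
  have hsb1 : P SatVtx.s < P (SatVtx.b 1) := by
    have hm1 : satHostPage N M lit (σ s(SatVtx.s, SatVtx.gv 0)) s(SatVtx.s, SatVtx.gv 0) ∨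
        s(SatVtx.s, SatVtx.gv 0) ∈ satNew N M ∧
          σ s(SatVtx.s, SatVtx.gv 0) = σ s(SatVtx.s, SatVtx.gv 0) :=
      Or.inr ⟨memsgv0, rfl⟩
    rcases lt_or_eq_of_le (hσle _ memsgv0) with hplt | hpeq
    · -- page < 2N : use b0-a0
      have hm2 : satHostPage N M lit (σ s(SatVtx.s, SatVtx.gv 0)) s(SatVtx.b 0, SatVtx.a 0) ∨
          s(SatVtx.b 0, SatVtx.a 0) ∈ satNew N M ∧ σ s(SatVtx.b 0, SatVtx.a 0) =
            σ s(SatVtx.s, SatVtx.gv 0) :=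
        Or.inl (Or.inl ⟨hplt, 0, by norm_num, rfl⟩)
      have hsa0 : P SatVtx.s < P (SatVtx.a 0) := by
        rcases lt_trichotomy (P SatVtx.s) (P (SatVtx.a 0)) with h | h | h
        · exact h
        · exact absurd h (hnes _ (Ha 0 (by norm_num)))
        · exact (hnc _ _ _ hm2 hm1
            ⟨SatVtx.b 0, SatVtx.gv 0, SatVtx.a 0, SatVtx.s, rfl, Sym2.eq_swap,
              hb0gv0, hgv0a0, h⟩).elim
      exact hsa0.trans ha0b1
    · -- page = 2N
      rcases lt_trichotomy (P SatVtx.s) (P (SatVtx.b 1)) with h | h | h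
      · exact h
      · exact absurd h (hnes _ (Hb 1 (by norm_num)))
      · exfalso
        rcases lt_trichotomy (P SatVtx.s) (P (SatVtx.gv 1)) with h2 | h2 | h2
        · exact hnc _ _ _ hm1
            (Or.inl (Or.inr (Or.inl ⟨hpeq, 1, by norm_num, Or.inl rfl⟩)))
            ⟨SatVtx.gv 0, SatVtx.b 1, SatVtx.s, SatVtx.gv 1, Sym2.eq_swap, rfl,
              hgv0b1, h, h2⟩
        · exact absurd h2 (hnes _ (Hgv 1 (by norm_num)))
        · rcases lt_trichotomy (P SatVtx.s) (P (SatVtx.gv 2)) with h3 | h3 | h3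
          · exact hnc _ _ _ hm1
              (Or.inl (Or.inr (Or.inr (Or.inl ⟨hpeq, Or.inr (Or.inl rfl)⟩))))
              ⟨SatVtx.gv 0, SatVtx.gv 1, SatVtx.s, SatVtx.gv 2, Sym2.eq_swap, rfl,
                hgv0gv1, h2, h3⟩
          · exact absurd h3 (hnes _ (Hgv 2 (by norm_num)))
          · rcases lt_trichotomy (P SatVtx.s) (P (SatVtx.a 2)) with h4 | h4 | h4
            · exact hnc _ _ _ hm1
                (Or.inl (Or.inr (Or.inl ⟨hpeq, 2, by norm_num, Or.inr rfl⟩)))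
                ⟨SatVtx.gv 0, SatVtx.gv 2, SatVtx.s, SatVtx.a 2, Sym2.eq_swap, rfl,
                  hgv0gv2, h3, h4⟩
            · exact absurd h4 (hnes _ (Ha 2 (by norm_num)))
            · exact hnc _ _ _
                (Or.inl (Or.inr (Or.inr (Or.inl ⟨hpeq, Or.inr (Or.inr (Or.inl rfl))⟩))))
                hm1
                ⟨SatVtx.b 0, SatVtx.gv 0, SatVtx.a 2, SatVtx.s, rfl, Sym2.eq_swap,
                  hb0gv0, hgv0a2, h4⟩
  -- Claim 2 : P (a 1) < P w < P (a 2)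
  have hwa : P (SatVtx.a 1) < P SatVtx.w ∧ P SatVtx.w < P (SatVtx.a 2) := by
    have hm1 : satHostPage N M lit (σ s(SatVtx.w, SatVtx.gv 2)) s(SatVtx.w, SatVtx.gv 2) ∨
        s(SatVtx.w, SatVtx.gv 2) ∈ satNew N M ∧
          σ s(SatVtx.w, SatVtx.gv 2) = σ s(SatVtx.w, SatVtx.gv 2) :=
      Or.inr ⟨memwgv2, rfl⟩
    rcases lt_or_eq_of_le (hσle _ memwgv2) with hplt | hpeq
    · -- page < 2N : use b2-a2
      have hm2 : satHostPage N M lit (σ s(SatVtx.w, SatVtx.gv 2)) s(SatVtx.b 2, SatVtx.a 2) ∨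
          s(SatVtx.b 2, SatVtx.a 2) ∈ satNew N M ∧ σ s(SatVtx.b 2, SatVtx.a 2) =
            σ s(SatVtx.w, SatVtx.gv 2) :=
        Or.inl (Or.inl ⟨hplt, 2, by norm_num, rfl⟩)
      have h1 : P (SatVtx.b 2) < P SatVtx.w := by
        rcases lt_trichotomy (P (SatVtx.b 2)) (P SatVtx.w) with h | h | h
        · exact h
        · exact absurd h.symm (hnew _ (Hb 2 (by norm_num)))
        · exact (hnc _ _ _ hm1 hm2
            ⟨SatVtx.w, SatVtx.b 2, SatVtx.gv 2, SatVtx.a 2, rfl, rfl, h, hb2gv2, hgv2a2⟩).elim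
      have h2 : P SatVtx.w < P (SatVtx.a 2) := by
        rcases lt_trichotomy (P SatVtx.w) (P (SatVtx.a 2)) with h | h | h
        · exact h
        · exact absurd h (hnew _ (Ha 2 (by norm_num)))
        · exact (hnc _ _ _ hm2 hm1
            ⟨SatVtx.b 2, SatVtx.gv 2, SatVtx.a 2, SatVtx.w, rfl, Sym2.eq_swap,
              hb2gv2, hgv2a2, h⟩).elim
      exact ⟨ha1b2.trans h1, h2⟩
    · -- page = 2N
      have h2 : P SatVtx.w < P (SatVtx.a 2) := by
        rcases lt_trichotomy (P SatVtx.w) (P (SatVtx.a 2)) with h | h | h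
        · exact h
        · exact absurd h (hnew _ (Ha 2 (by norm_num)))
        · exact (hnc _ _ _
            (Or.inl (Or.inr (Or.inr (Or.inl ⟨hpeq, Or.inr (Or.inr (Or.inl rfl))⟩))))
            hm1
            ⟨SatVtx.b 0, SatVtx.gv 2, SatVtx.a 2, SatVtx.w, rfl, Sym2.eq_swap,
              hb0gv2, hgv2a2, h⟩).elim
      refine ⟨?_, h2⟩
      rcases lt_trichotomy (P (SatVtx.a 1)) (P SatVtx.w) with h | h | h
      · exact h
      · exact absurd h.symm (hnew _ (Ha 1 (by norm_num)))
      · exfalso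
        rcases lt_trichotomy (P (SatVtx.gv 1)) (P SatVtx.w) with h3 | h3 | h3
        · exact hnc _ _ _
            (Or.inl (Or.inr (Or.inl ⟨hpeq, 1, by norm_num, Or.inr rfl⟩)))
            hm1
            ⟨SatVtx.gv 1, SatVtx.w, SatVtx.a 1, SatVtx.gv 2, rfl, rfl, h3, h, ha1gv2⟩
        · exact absurd h3.symm (hnew _ (Hgv 1 (by norm_num)))
        · rcases lt_trichotomy (P (SatVtx.gv 0)) (P SatVtx.w) with h4 | h4 | h4
          · exact hnc _ _ _
              (Or.inl (Or.inr (Or.inr (Or.inl ⟨hpeq, Or.inl rfl⟩))))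
              hm1
              ⟨SatVtx.gv 0, SatVtx.w, SatVtx.gv 1, SatVtx.gv 2, rfl, rfl, h4, h3, hgv1gv2⟩
          · exact absurd h4.symm (hnew _ (Hgv 0 (by norm_num)))
          · rcases lt_trichotomy (P (SatVtx.b 0)) (P SatVtx.w) with h5 | h5 | h5
            · exact hnc _ _ _
                (Or.inl (Or.inr (Or.inl ⟨hpeq, 0, by norm_num, Or.inl rfl⟩)))
                hm1
                ⟨SatVtx.b 0, SatVtx.w, SatVtx.gv 0, SatVtx.gv 2, rfl, rfl, h5, h4, hgv0gv2⟩
            · exact absurd h5.symm (hnew _ (Hb 0 (by norm_num)))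
            · exact hnc _ _ _ hm1
                (Or.inl (Or.inr (Or.inr (Or.inl ⟨hpeq, Or.inr (Or.inr (Or.inl rfl))⟩))))
                ⟨SatVtx.w, SatVtx.b 0, SatVtx.gv 2, SatVtx.a 2, rfl, rfl, h5, hb0gv2, hgv2a2⟩
  -- the assignment
  refine ⟨fun i => decide (σ s(SatVtx.s, SatVtx.X i) = 2 * i), ?_⟩
  intro j hj
  -- positions of the relevant hosts
  have hwd0 : P SatVtx.w < P (SatVtx.d 0) :=
    hwa.2.trans (hlt (Ha 2 (by norm_num)) (Hd 0 (by norm_num)) (by norm_num [satPos]))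
  have hsd0 : P SatVtx.s < P (SatVtx.d 0) :=
    hsb1.trans (hlt (Hb 1 (by norm_num)) (Hd 0 (by norm_num)) (by norm_num [satPos]))
  have hsw : P SatVtx.s < P SatVtx.w := hsb1.trans (hb1a1.trans hwa.1)
  have memwc : s(SatVtx.w, SatVtx.C j) ∈ satNew N M :=
    Or.inr (Or.inr (Or.inr (Or.inr (Or.inr ⟨j, hj, rfl⟩))))
  have hm1 : satHostPage N M lit (σ s(SatVtx.w, SatVtx.C j)) s(SatVtx.w, SatVtx.C j) ∨
      s(SatVtx.w, SatVtx.C j) ∈ satNew N M ∧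
        σ s(SatVtx.w, SatVtx.C j) = σ s(SatVtx.w, SatVtx.C j) :=
    Or.inr ⟨memwc, rfl⟩
  have hd0c : P (SatVtx.d 0) < P (SatVtx.C j) :=
    hlt (Hd 0 (by norm_num)) (HC j hj) (by simp only [satPos]; omega)
  have hcdNM : P (SatVtx.C j) < P (SatVtx.d (N + M)) :=
    hlt (HC j hj) (Hd (N + M) le_rfl) (by simp only [satPos]; omega)
  have hpne : σ s(SatVtx.w, SatVtx.C j) ≠ 2 * N := by
    intro hpeq
    exact hnc _ _ _ hm1
      (Or.inl (Or.inr (Or.inr (Or.inl ⟨hpeq, Or.inr (Or.inr (Or.inr rfl))⟩))))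
      ⟨SatVtx.w, SatVtx.d 0, SatVtx.C j, SatVtx.d (N + M), rfl, rfl, hwd0, hd0c, hcdNM⟩
  have hplt : σ s(SatVtx.w, SatVtx.C j) < 2 * N :=
    lt_of_le_of_ne (hσle _ memwc) hpne
  set i := σ s(SatVtx.w, SatVtx.C j) / 2 with hidef
  have hiN : i < N := by omega
  have hpor : σ s(SatVtx.w, SatVtx.C j) = 2 * i ∨ σ s(SatVtx.w, SatVtx.C j) = 2 * i + 1 := by
    omega
  -- the clause segment cannot lie on this page
  have hwdNj : P SatVtx.w < P (SatVtx.d (N + j)) :=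
    hwa.2.trans (hlt (Ha 2 (by norm_num)) (Hd (N + j) (by omega)) (by simp only [satPos]; omega))
  have hdc : P (SatVtx.d (N + j)) < P (SatVtx.C j) :=
    hlt (Hd (N + j) (by omega)) (HC j hj) (by simp only [satPos]; omega)
  have hcd : P (SatVtx.C j) < P (SatVtx.d (N + j + 1)) :=
    hlt (HC j hj) (Hd (N + j + 1) (by omega)) (by simp only [satPos]; omega)
  have hsegmem : ∀ hm : satHostPage N M lit (σ s(SatVtx.w, SatVtx.C j))
      s(SatVtx.d (N + j), SatVtx.d (N + j + 1)), False := by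
    intro hm
    exact hnc _ _ _ hm1 (Or.inl hm)
      ⟨SatVtx.w, SatVtx.d (N + j), SatVtx.C j, SatVtx.d (N + j + 1), rfl, rfl,
        hwdNj, hdc, hcd⟩
  -- analysis of the page of s-X i
  have memsx : s(SatVtx.s, SatVtx.X i) ∈ satNew N M :=
    Or.inr (Or.inr (Or.inr (Or.inr (Or.inl ⟨i, hiN, rfl⟩))))
  have hmx : satHostPage N M lit (σ s(SatVtx.s, SatVtx.X i)) s(SatVtx.s, SatVtx.X i) ∨
      s(SatVtx.s, SatVtx.X i) ∈ satNew N M ∧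
        σ s(SatVtx.s, SatVtx.X i) = σ s(SatVtx.s, SatVtx.X i) :=
    Or.inr ⟨memsx, rfl⟩
  have hd0X : P (SatVtx.d 0) < P (SatVtx.X i) :=
    hlt (Hd 0 (by norm_num)) (HX i hiN) (by simp only [satPos]; omega)
  have hXdNM : P (SatVtx.X i) < P (SatVtx.d (N + M)) :=
    hlt (HX i hiN) (Hd (N + M) le_rfl) (by simp only [satPos]; omega)
  have hsdi : P SatVtx.s < P (SatVtx.d i) :=
    hsb1.trans (hlt (Hb 1 (by norm_num)) (Hd i (by omega)) (by simp only [satPos]; omega))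
  have hdiX : P (SatVtx.d i) < P (SatVtx.X i) :=
    hlt (Hd i (by omega)) (HX i hiN) (by simp only [satPos]; omega)
  have hXdi1 : P (SatVtx.X i) < P (SatVtx.d (i + 1)) :=
    hlt (HX i hiN) (Hd (i + 1) (by omega)) (by simp only [satPos]; omega)
  have hqne : σ s(SatVtx.s, SatVtx.X i) ≠ 2 * N := by
    intro hq
    exact hnc _ _ _ hmx
      (Or.inl (Or.inr (Or.inr (Or.inl ⟨hq, Or.inr (Or.inr (Or.inr rfl))⟩))))
      ⟨SatVtx.s, SatVtx.d 0, SatVtx.X i, SatVtx.d (N + M), rfl, rfl, hsd0, hd0X, hXdNM⟩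
  have hqlt : σ s(SatVtx.s, SatVtx.X i) < 2 * N :=
    lt_of_le_of_ne (hσle _ memsx) hqne
  have hqor : σ s(SatVtx.s, SatVtx.X i) = 2 * i ∨ σ s(SatVtx.s, SatVtx.X i) = 2 * i + 1 := by
    by_contra hnot
    push_neg at hnot
    refine hnc _ _ _ hmx
      (Or.inl (Or.inr (Or.inr (Or.inr (Or.inl
        ⟨i, σ s(SatVtx.s, SatVtx.X i) / 2, hiN, by omega, by omega, rfl, by omega⟩)))))
      ⟨SatVtx.s, SatVtx.d i, SatVtx.X i, SatVtx.d (i + 1), rfl, rfl, hsdi, hdiX, hXdi1⟩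
  have hwX : P SatVtx.w < P (SatVtx.X i) := hwd0.trans hd0X
  have hXC : P (SatVtx.X i) < P (SatVtx.C j) :=
    hlt (HX i hiN) (HC j hj) (by simp only [satPos]; omega)
  have hqnep : σ s(SatVtx.s, SatVtx.X i) ≠ σ s(SatVtx.w, SatVtx.C j) := by
    intro hq
    exact hnc _ _ _ (Or.inr ⟨memsx, hq⟩) hm1
      ⟨SatVtx.s, SatVtx.w, SatVtx.X i, SatVtx.C j, rfl, rfl, hsw, hwX, hXC⟩
  rcases hpor with hp2 | hp2
  · -- page = 2i : clause j contains the literal (i, false)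
    by_cases hpos : ∃ t, t < 3 ∧ lit j t = (i, true)
    · exact ((hsegmem (Or.inr (Or.inr (Or.inr (Or.inr
        ⟨j, i, hj, hiN, rfl, Or.inl ⟨hpos, hp2⟩⟩))))).elim)
    · by_cases habs : ∀ t, t < 3 → (lit j t).1 ≠ i
      · exact ((hsegmem (Or.inr (Or.inr (Or.inr (Or.inr
          ⟨j, i, hj, hiN, rfl, Or.inr (Or.inr ⟨habs, Or.inl hp2⟩)⟩))))).elim)
      · push_neg at habs
        obtain ⟨t, ht, hti⟩ := habs
        have hsign : (lit j t).2 = false := by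
          cases hB : (lit j t).2
          · rfl
          · exact absurd ⟨t, ht, by rw [← hti, ← hB]⟩ hpos
        have hx : σ s(SatVtx.s, SatVtx.X i) = 2 * i + 1 := by omega
        refine ⟨t, ht, ?_⟩
        show decide (σ s(SatVtx.s, SatVtx.X (lit j t).1) = 2 * (lit j t).1) = (lit j t).2
        rw [hti, hsign]
        exact decide_eq_false (by omega)
  · -- page = 2i+1 : clause j contains the literal (i, true)
    by_cases hpos : ∃ t, t < 3 ∧ lit j t = (i, false)
    · exact ((hsegmem (Or.inr (Or.inr (Or.inr (Or.inr
        ⟨j, i, hj, hiN, rfl, Or.inr (Or.inl ⟨hpos, hp2⟩)⟩))))).elim)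
    · by_cases habs : ∀ t, t < 3 → (lit j t).1 ≠ i
      · exact ((hsegmem (Or.inr (Or.inr (Or.inr (Or.inr
          ⟨j, i, hj, hiN, rfl, Or.inr (Or.inr ⟨habs, Or.inr hp2⟩)⟩))))).elim)
      · push_neg at habs
        obtain ⟨t, ht, hti⟩ := habs
        have hsign : (lit j t).2 = true := by
          cases hB : (lit j t).2
          · exact absurd ⟨t, ht, by rw [← hti, ← hB]⟩ hpos
          · rfl
        have hx : σ s(SatVtx.s, SatVtx.X i) = 2 * i := by omega
        refine ⟨t, ht, ?_⟩
        show decide (σ s(SatVtx.s, SatVtx.X (lit j t).1) = 2 * (lit j t).1) = (lit j t).2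
        rw [hti, hsign]
        exact decide_eq_true (by omega)

/-- A 3-SAT formula `φ` with `N` variables and `M` clauses (each with
three pairwise distinct, pairwise non-complementary literals, i.e. three literals on
pairwise distinct variables) is satisfiable iff the constructed instance of
Stack Layout Extension with `ℓ = 2N + 1` pages admits an extension. -/
theorem stmt4 (N M : ℕ) (lit : ℕ → ℕ → ℕ × Bool)
    (hlit : ∀ j < M, ∀ t < 3, (lit j t).1 < N)
    (hdist : ∀ j < M, ∀ t < 3, ∀ t' < 3, (lit j t).1 = (lit j t').1 → t = t') :
    (∃ Γ : ℕ → Bool, ∀ j < M, ∃ t, t < 3 ∧ Γ (lit j t).1 = (lit j t).2) ↔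
      ∃ (posG : SatVtx → ℕ) (σ : Sym2 SatVtx → ℕ),
        Set.InjOn posG {v | satHost N M v ∨ v = SatVtx.s ∨ v = SatVtx.w} ∧
        (∀ y z, satHost N M y → satHost N M z →
          (satPos N y < satPos N z ↔ posG y < posG z)) ∧
        (∀ e ∈ satNew N M, σ e ≤ 2 * N) ∧
        (∀ p e f, (satHostPage N M lit p e ∨ e ∈ satNew N M ∧ σ e = p) →
          (satHostPage N M lit p f ∨ f ∈ satNew N M ∧ σ f = p) →
          ¬ EdgesCross posG e f) := by
  constructor
  · rintro ⟨Γ, hΓ⟩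
    exact fwd_main N M lit hlit hdist Γ hΓ
  · intro h
    exact rev_main N M lit hlit hdist h
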